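/- Let p₁: E ⥤ D and p₂: D ⥤ S be functors between categories such that: (1) p₂ ∘ p₁ is a Grothendieck opfibration; (2) p₁ maps every morphism that is strongly coCartesian with respect to p₂ ∘ p₁ to a morphism that is strongly coCartesian with respect to p₂; (3) for every object s of S the induced functor between fibers (p₁)_s: E_s ⥤ D_s is a Grothendieck opfibration; (4) for every morphism f: s → t in S, every commutative square in D consisting of a morphism τ: X → Y lying over 𝟙_s, morphisms ξ: X → G and ξ': Y → H lying over f that are strongly coCartesian with respect to p₂, and a morphism χ: G → H lying over 𝟙_t with χ ∘ ξ = ξ' ∘ τ, and every commutative square in E lying over it consisting of a morphism κ over ξ and a morphism κ' over ξ' that are both strongly coCartesian with respect to p₂ ∘ p₁, a morphism μ over τ that is strongly coCartesian with respect to (p₁)_s: E_s ⥤ D_s, and a morphism ν over χ with ν ∘ κ = κ' ∘ μ, the morphism ν is strongly coCartesian with respect to (p₁)_t: E_t ⥤ D_t. Then p₁ is a Grothendieck opfibration. -/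

import Mathlib

open CategoryTheory

universe v₁ v₂ v₃ u₁ u₂ u₃

namespace PaperFib

/-- A morphism `ξ : x ⟶ y` is strongly coCartesian with respect to `p : E ⥤ S` if for every
morphism `h : x ⟶ z` and every factorization `p(h) = v ∘ p(ξ)` there is a unique morphism
`w : y ⟶ z` with `p(w) = v` and `w ∘ ξ = h`. -/
def IsStronglyCocartesian {E : Type u₁} {S : Type u₂} [Category.{v₁} E] [Category.{v₂} S]
    (p : E ⥤ S) {x y : E} (ξ : x ⟶ y) : Prop :=
  ∀ (z : E) (h : x ⟶ z) (v : p.obj y ⟶ p.obj z), p.map h = p.map ξ ≫ v →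
    ∃! w : y ⟶ z, p.map w = v ∧ ξ ≫ w = h

/-- A morphism `ξ : x ⟶ y` is strongly Cartesian with respect to `p : E ⥤ S` if for every
morphism `h : z ⟶ y` and every factorization `p(h) = p(ξ) ∘ v` there is a unique morphism
`w : z ⟶ x` with `p(w) = v` and `ξ ∘ w = h`. -/
def IsStronglyCartesian {E : Type u₁} {S : Type u₂} [Category.{v₁} E] [Category.{v₂} S]
    (p : E ⥤ S) {x y : E} (ξ : x ⟶ y) : Prop :=
  ∀ (z : E) (h : z ⟶ y) (v : p.obj z ⟶ p.obj x), p.map h = v ≫ p.map ξ →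
    ∃! w : z ⟶ x, p.map w = v ∧ w ≫ ξ = h

/-- `p : E ⥤ S` is a Grothendieck opfibration if every morphism `p(x) ⟶ s` admits a strongly
coCartesian lift starting at `x`. -/
def IsGrothendieckOpfibration {E : Type u₁} {S : Type u₂} [Category.{v₁} E] [Category.{v₂} S]
    (p : E ⥤ S) : Prop :=
  ∀ (x : E) (s : S) (f : p.obj x ⟶ s), ∃ (y : E) (ξ : x ⟶ y) (hy : p.obj y = s),
    p.map ξ = f ≫ eqToHom hy.symm ∧ IsStronglyCocartesian p ξ

/-- `p : E ⥤ S` is a Grothendieck fibration if every morphism `s ⟶ p(y)` admits a strongly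
Cartesian lift ending at `y`. -/
def IsGrothendieckFibration {E : Type u₁} {S : Type u₂} [Category.{v₁} E] [Category.{v₂} S]
    (p : E ⥤ S) : Prop :=
  ∀ (y : E) (s : S) (f : s ⟶ p.obj y), ∃ (x : E) (ξ : x ⟶ y) (hx : p.obj x = s),
    p.map ξ = eqToHom hx ≫ f ∧ IsStronglyCartesian p ξ

section Fiber

variable {E : Type u₁} {S : Type u₂} [Category.{v₁} E] [Category.{v₂} S]

/-- The fiber of `p : E ⥤ S` over `s`: objects of `E` mapping to `s` and morphisms mapping
to `𝟙 s`. -/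
def Fiber (p : E ⥤ S) (s : S) : Type u₁ := {x : E // p.obj x = s}

instance Fiber.category (p : E ⥤ S) (s : S) : Category (Fiber p s) where
  Hom x y := {f : x.1 ⟶ y.1 // p.map f = eqToHom (x.2.trans y.2.symm)}
  id x := ⟨𝟙 _, by simp⟩
  comp f g := ⟨f.1 ≫ g.1, by rw [Functor.map_comp, f.2, g.2, eqToHom_trans]⟩
  id_comp f := Subtype.ext (Category.id_comp f.1)
  comp_id f := Subtype.ext (Category.comp_id f.1)
  assoc f g h := Subtype.ext (Category.assoc f.1 g.1 h.1)

end Fiber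

variable {E : Type u₁} {D : Type u₂} {S : Type u₃}
variable [Category.{v₁} E] [Category.{v₂} D] [Category.{v₃} S]

/-- The functor `(p₁)_s : E_s ⥤ D_s` induced by `p₁` between the fibers over `s` of
`p₂ ∘ p₁` and of `p₂`. -/
def fiberFunctor (p₁ : E ⥤ D) (p₂ : D ⥤ S) (s : S) : Fiber (p₁ ⋙ p₂) s ⥤ Fiber p₂ s where
  obj x := ⟨p₁.obj x.1, x.2⟩
  map f := ⟨p₁.map f.1, f.2⟩
  map_id x := Subtype.ext (p₁.map_id x.1)
  map_comp f g := Subtype.ext (p₁.map_comp f.1 g.1)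

section Aux

variable {E₀ : Type u₁} {S₀ : Type u₂} [Category.{v₁} E₀] [Category.{v₂} S₀]

theorem IsStronglyCocartesian.comp {p : E₀ ⥤ S₀} {x y z : E₀} {ξ : x ⟶ y} {η : y ⟶ z}
    (hξ : IsStronglyCocartesian p ξ) (hη : IsStronglyCocartesian p η) :
    IsStronglyCocartesian p (ξ ≫ η) := by
  intro w h v hv
  obtain ⟨w₁, ⟨hw₁p, hw₁c⟩, hw₁u⟩ := hξ w h (p.map η ≫ v)
    (by rw [hv, p.map_comp, Category.assoc])
  obtain ⟨w₂, ⟨hw₂p, hw₂c⟩, hw₂u⟩ := hη w w₁ v hw₁p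
  refine ⟨w₂, ⟨hw₂p, by rw [Category.assoc, hw₂c, hw₁c]⟩, ?_⟩
  rintro w' ⟨hp, hc⟩
  refine hw₂u w' ⟨hp, ?_⟩
  refine hw₁u (η ≫ w') ⟨by rw [p.map_comp, hp], by rw [← Category.assoc]; exact hc⟩

@[simp] theorem Fiber.comp_val {p : E₀ ⥤ S₀} {s : S₀} {a b c : Fiber p s}
    (f : a ⟶ b) (g : b ⟶ c) : (f ≫ g).1 = f.1 ≫ g.1 := rfl

@[simp] theorem Fiber.id_val {p : E₀ ⥤ S₀} {s : S₀} (a : Fiber p s) :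
    (𝟙 a : a ⟶ a).1 = 𝟙 a.1 := rfl

theorem Fiber.eqToHom_val {p : E₀ ⥤ S₀} {s : S₀} {a b : Fiber p s} (h : a = b) :
    (eqToHom h : a ⟶ b).1 = eqToHom (congrArg Subtype.val h) := by
  subst h; rfl

/-- Helper to build a morphism in a fiber category without unfolding `Fiber`. -/
def mkFiberHom {p : E₀ ⥤ S₀} {s : S₀} (a b : Fiber p s) (f : a.1 ⟶ b.1)
    (h : p.map f = eqToHom (a.2.trans b.2.symm)) : a ⟶ b := ⟨f, h⟩

end Aux

/-- **Statement 14.** A criterion for `p₁` to be a Grothendieck opfibration, given that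
`p₂ ∘ p₁` is one. -/
theorem isGrothendieckOpfibration_of_comp
    (p₁ : E ⥤ D) (p₂ : D ⥤ S)
    (h1 : IsGrothendieckOpfibration (p₁ ⋙ p₂))
    (h2 : ∀ {x y : E} (ξ : x ⟶ y), IsStronglyCocartesian (p₁ ⋙ p₂) ξ →
        IsStronglyCocartesian p₂ (p₁.map ξ))
    (h3 : ∀ s : S, IsGrothendieckOpfibration (fiberFunctor p₁ p₂ s))
    (h4 : ∀ {s t : S} (f : s ⟶ t)
        (a b : Fiber (p₁ ⋙ p₂) s) (g h : Fiber (p₁ ⋙ p₂) t)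
        (μ : a ⟶ b) (κ : a.1 ⟶ g.1) (κ' : b.1 ⟶ h.1) (ν : g ⟶ h),
        -- the square in `E` commutes
        κ ≫ ν.1 = μ.1 ≫ κ' →
        -- `κ` and `κ'` are strongly coCartesian w.r.t. `p₂ ∘ p₁` and lie over `f`
        IsStronglyCocartesian (p₁ ⋙ p₂) κ →
        IsStronglyCocartesian (p₁ ⋙ p₂) κ' →
        (p₁ ⋙ p₂).map κ = eqToHom a.2 ≫ f ≫ eqToHom g.2.symm →
        (p₁ ⋙ p₂).map κ' = eqToHom b.2 ≫ f ≫ eqToHom h.2.symm →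
        -- the image morphisms `ξ = p₁(κ)`, `ξ' = p₁(κ')` are strongly coCartesian w.r.t. `p₂`
        IsStronglyCocartesian p₂ (p₁.map κ) →
        IsStronglyCocartesian p₂ (p₁.map κ') →
        -- `μ` is strongly coCartesian w.r.t. the induced functor between the fibers over `s`
        IsStronglyCocartesian (fiberFunctor p₁ p₂ s) μ →
        -- then `ν` is strongly coCartesian w.r.t. the induced functor between the fibers
        -- over `t`
        IsStronglyCocartesian (fiberFunctor p₁ p₂ t) ν) :
    IsGrothendieckOpfibration p₁ := by
  intro x d f
  -- Step 1: a strongly coCartesian lift `κ : x ⟶ g` of `p₂ f` w.r.t. `p₁ ⋙ p₂`.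
  obtain ⟨g, κ, hg, hκ, Hκ⟩ := h1 x (p₂.obj d) (p₂.map f)
  have Hκ₂ : IsStronglyCocartesian p₂ (p₁.map κ) := h2 κ Hκ
  have hκ' : p₂.map (p₁.map κ) = p₂.map f ≫ eqToHom hg.symm := hκ
  -- Step 2: factor `f` through `p₁ κ` via a vertical `χ₀`.
  obtain ⟨χ₀, ⟨hχp, hχc⟩, hχu⟩ := Hκ₂ d f (eqToHom hg)
    (by rw [hκ', Category.assoc, eqToHom_trans, eqToHom_refl, Category.comp_id])
  -- Step 3: a strongly coCartesian lift of `χ₀` in the fibers over `p₂ d`.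
  obtain ⟨H, ν, hH, hν, Hν⟩ := h3 (p₂.obj d) ⟨g, hg⟩ ⟨d, rfl⟩
    ⟨χ₀, hχp⟩
  have hy : p₁.obj H.1 = d := congrArg Subtype.val hH
  have hν1 : p₁.map ν.1 = χ₀ ≫ eqToHom hy.symm := by
    have := congrArg Subtype.val hν
    exact this.trans ((Fiber.comp_val _ _).trans (congrArg (χ₀ ≫ ·) (Fiber.eqToHom_val _)))
  have hν2 : p₂.map (p₁.map ν.1) = eqToHom (hg.trans H.2.symm) := ν.2
  refine ⟨H.1, κ ≫ ν.1, hy, ?_, ?_⟩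
  · rw [p₁.map_comp, hν1, ← Category.assoc, hχc]
  -- Step 4: `κ ≫ ν.1` is strongly coCartesian w.r.t. `p₁`.
  intro z hm v hv
  -- lift of `p₂ v` at `H.1`
  obtain ⟨h₂, κh, hh₂, hκh, Hκh⟩ := h1 H.1 (p₂.obj (p₁.obj z)) (p₂.map v)
  have hκh' : p₂.map (p₁.map κh) = p₂.map v ≫ eqToHom hh₂.symm := hκh
  have Hκh₂ : IsStronglyCocartesian p₂ (p₁.map κh) := h2 κh Hκh
  -- the vertical part `v'` of `v`
  obtain ⟨v', ⟨hv'p, hv'c⟩, hv'u⟩ := Hκh₂ (p₁.obj z) v (eqToHom hh₂)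
    (by rw [hκh', Category.assoc, eqToHom_trans, eqToHom_refl, Category.comp_id])
  -- lift of `p₂ v` (transported) at `g`
  obtain ⟨g₂, κg, hg₂, hκg, Hκg⟩ := h1 g (p₂.obj (p₁.obj z))
    (eqToHom (hg.trans H.2.symm) ≫ p₂.map v)
  have hκg' : p₂.map (p₁.map κg) =
      (eqToHom (hg.trans H.2.symm) ≫ p₂.map v) ≫ eqToHom hg₂.symm := hκg
  -- the comparison morphism `ν'₀ : g₂ ⟶ h₂`
  obtain ⟨ν'₀, ⟨hν'p, hν'c⟩, hν'u⟩ := Hκg h₂ (ν.1 ≫ κh) (eqToHom (hg₂.trans hh₂.symm))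
    (by
      show p₂.map (p₁.map (ν.1 ≫ κh)) = p₂.map (p₁.map κg) ≫ _
      rw [p₁.map_comp, p₂.map_comp, hν2, hκh', hκg']
      simp)
  have hν'p' : p₂.map (p₁.map ν'₀) = eqToHom (hg₂.trans hh₂.symm) := hν'p
  -- `ν'` is strongly coCartesian in the fiber over `p₂ (p₁ z)` by h4
  have Hν' : IsStronglyCocartesian (fiberFunctor p₁ p₂ (p₂.obj (p₁.obj z)))
      (mkFiberHom (⟨g₂, hg₂⟩ : Fiber (p₁ ⋙ p₂) (p₂.obj (p₁.obj z))) ⟨h₂, hh₂⟩ ν'₀ hν'p) := by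
    refine h4 (eqToHom H.2.symm ≫ p₂.map v) ⟨g, hg⟩ H ⟨g₂, hg₂⟩ ⟨h₂, hh₂⟩
      ν κg κh ⟨ν'₀, hν'p⟩ hν'c Hκg Hκh ?_ ?_ (h2 κg Hκg) (h2 κh Hκh) Hν
    · show p₂.map (p₁.map κg) = _
      rw [hκg']
      simp
    · show p₂.map (p₁.map κh) = _
      rw [hκh']
      simp
  -- the composite `κ ≫ κg` is strongly coCartesian; factor `hm` through it
  have Hκκg : IsStronglyCocartesian (p₁ ⋙ p₂) (κ ≫ κg) := Hκ.comp Hκg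
  have hmfact : p₂.map (p₁.map hm) =
      p₂.map (p₁.map κ) ≫ eqToHom (hg.trans H.2.symm) ≫ p₂.map v := by
    rw [hv]
    simp only [Functor.map_comp, Category.assoc, hν2]
  obtain ⟨w₂, ⟨hw₂p, hw₂c⟩, hw₂u⟩ := Hκκg z hm (eqToHom hg₂)
    (by
      show p₂.map (p₁.map hm) = p₂.map (p₁.map (κ ≫ κg)) ≫ _
      rw [hmfact]
      simp only [Functor.map_comp, hκg']
      simp)
  have hw₂p' : p₂.map (p₁.map w₂) = eqToHom hg₂ := hw₂p
  -- key : `p₁ w₂ = p₁ ν'₀ ≫ v'`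
  have step1 : p₁.map ν.1 ≫ v = p₁.map κg ≫ p₁.map w₂ := by
    obtain ⟨u, hu, huu⟩ := Hκ₂ (p₁.obj z) (p₁.map hm)
      (eqToHom (hg.trans H.2.symm) ≫ p₂.map v) hmfact
    have e1 : p₁.map ν.1 ≫ v = u := huu _
      ⟨by rw [p₂.map_comp, hν2], by rw [← Category.assoc, ← p₁.map_comp, hv]⟩
    have e2 : p₁.map κg ≫ p₁.map w₂ = u := huu _
      ⟨by rw [p₂.map_comp, hκg', hw₂p']; simp,
       by rw [← p₁.map_comp, ← p₁.map_comp, ← Category.assoc, hw₂c]⟩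
    rw [e1, e2]
  have key : p₁.map w₂ = p₁.map ν'₀ ≫ v' := by
    obtain ⟨u, hu, huu⟩ := (h2 κg Hκg) (p₁.obj z) (p₁.map ν.1 ≫ v) (eqToHom hg₂)
      (by
        rw [p₂.map_comp, hν2]
        show _ = p₂.map (p₁.map κg) ≫ _
        rw [hκg']
        simp)
    have e1 : p₁.map w₂ = u := huu _ ⟨hw₂p', step1.symm⟩
    have e2 : p₁.map ν'₀ ≫ v' = u := huu _
      ⟨by rw [p₂.map_comp, hν'p', hv'p, eqToHom_trans],
       by
        rw [← Category.assoc, ← p₁.map_comp, hν'c, p₁.map_comp, Category.assoc, hv'c]⟩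
    rw [e1, e2]
  -- factor `w₂` through `ν'` in the fiber over `p₂ (p₁ z)`
  obtain ⟨w'f, ⟨hw'p, hw'c⟩, hw'u⟩ := Hν' ⟨z, rfl⟩ ⟨w₂, hw₂p⟩
    ⟨v', hv'p⟩ (Subtype.ext key)
  have hw'p1 : p₁.map w'f.1 = v' := congrArg Subtype.val hw'p
  have hw'c1 : ν'₀ ≫ w'f.1 = w₂ := congrArg Subtype.val hw'c
  refine ⟨κh ≫ w'f.1, ⟨by rw [p₁.map_comp, hw'p1, hv'c], ?_⟩, ?_⟩
  · rw [Category.assoc, ← Category.assoc ν.1, ← hν'c]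
    rw [Category.assoc, hw'c1, ← Category.assoc]
    exact hw₂c
  -- uniqueness
  rintro wt ⟨hpt, hct⟩
  obtain ⟨wt', ⟨hwt'p, hwt'c⟩, _⟩ := Hκh z wt (eqToHom hh₂)
    (by
      show p₂.map (p₁.map wt) = p₂.map (p₁.map κh) ≫ _
      rw [hpt, hκh']
      simp)
  have hwt'p' : p₂.map (p₁.map wt') = eqToHom hh₂ := hwt'p
  have e1 : p₁.map wt' = v' := hv'u _
    ⟨hwt'p', by rw [← p₁.map_comp, hwt'c, hpt]⟩
  have e2 : ν'₀ ≫ wt' = w₂ := hw₂u _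
    ⟨by
      show p₂.map (p₁.map (ν'₀ ≫ wt')) = _
      rw [p₁.map_comp, p₂.map_comp, hν'p', hwt'p', eqToHom_trans],
     by
      rw [Category.assoc, ← Category.assoc κg, hν'c, Category.assoc, hwt'c,
        ← Category.assoc]
      exact hct⟩
  have e3 : (mkFiberHom (⟨h₂, hh₂⟩ : Fiber (p₁ ⋙ p₂) (p₂.obj (p₁.obj z))) ⟨z, rfl⟩ wt' hwt'p) = w'f :=
    hw'u _ ⟨Subtype.ext e1, Subtype.ext e2⟩
  rw [← hwt'c, show wt' = w'f.1 from congrArg Subtype.val e3]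

end PaperFib
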